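/- The hinge partial AUC surrogate over [α,β] decomposes as a difference of convex functions: for any w and sample S, (j_β − j_α)·R̂^hinge_{pAUC(α,β)}(w;S) = j_β·R̂^hinge_{pAUC(0,β)}(w;S) − j_α·R̂^hinge_{pAUC(0,α)}(w;S), where R̂^hinge_{pAUC(0,γ)}(w;S) = (1/(m j_γ)) Σ_{i=1}^m Σ_{j=1}^{j_γ} (1 − wᵀ(x⁺_i − x⁻_{(j)_w}))₊ and each R̂^hinge_{pAUC(0,γ)} is convex in w. -/

import Mathlib

/-- Dot product of vectors in ℝ^d. -/
noncomputable def dot {d : ℕ} (w x : Fin d → ℝ) : ℝ := ∑ l, w l * x l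

/-- The j-th largest (1-indexed) of the n negative scores wᵀx⁻_l. -/
noncomputable def kthScore {n d : ℕ} (w : Fin d → ℝ) (xn : Fin n → Fin d → ℝ) (j : ℕ) : ℝ :=
  (((Finset.univ : Finset (Fin n)).val.map fun l => dot w (xn l)).sort (· ≤ ·)).getD (n - j) 0

/-- Hinge partial AUC surrogate R̂^hinge_{pAUC}(w;S) over rank positions ja+1,…,jb. -/
noncomputable def hingeSurr {m n d : ℕ} (xp : Fin m → Fin d → ℝ) (xn : Fin n → Fin d → ℝ)
    (ja jb : ℕ) (w : Fin d → ℝ) : ℝ :=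
  (1 / ((m : ℝ) * ((jb : ℝ) - (ja : ℝ)))) *
    ∑ i, ∑ j ∈ Finset.Icc (ja + 1) jb, max (1 - (dot w (xp i) - kthScore w xn j)) 0

/-! ### Auxiliary lemmas -/

lemma dot_comb {d : ℕ} (x y v : Fin d → ℝ) (a b : ℝ) :
    dot (a • x + b • y) v = a * dot x v + b * dot y v := by
  simp [dot, Finset.mul_sum, add_mul, mul_assoc, Finset.sum_add_distrib]

lemma convexOn_hinge {d : ℕ} (u v : Fin d → ℝ) :
    ConvexOn ℝ Set.univ (fun w : Fin d → ℝ => max (1 - (dot w u - dot w v)) 0) := by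
  have haff : ConvexOn ℝ Set.univ (fun w : Fin d → ℝ => 1 - (dot w u - dot w v)) := by
    refine ⟨convex_univ, ?_⟩
    intro x _ y _ a b ha hb hab
    apply le_of_eq
    simp only [smul_eq_mul]
    rw [dot_comb, dot_comb]
    nlinarith [hab]
  have h0 : ConvexOn ℝ Set.univ (fun _ : Fin d → ℝ => (0:ℝ)) := convexOn_const 0 convex_univ
  exact haff.sup h0

lemma convexOn_finset_sum {ι : Type*} {d : ℕ} (t : Finset ι) (f : ι → (Fin d → ℝ) → ℝ)
    (h : ∀ i ∈ t, ConvexOn ℝ Set.univ (f i)) :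
    ConvexOn ℝ Set.univ (fun w => ∑ i ∈ t, f i w) := by
  classical
  induction t using Finset.cons_induction with
  | empty => simpa using convexOn_const 0 convex_univ
  | cons a t ha ih =>
    simp only [Finset.sum_cons]
    exact (h a (Finset.mem_cons_self a t)).add (ih fun i hi => h i (Finset.mem_cons_of_mem hi))

lemma convexOn_sup' {α : Type*} {d : ℕ} (t : Finset α) (hne : t.Nonempty)
    (f : α → (Fin d → ℝ) → ℝ) (h : ∀ i ∈ t, ConvexOn ℝ Set.univ (f i)) :
    ConvexOn ℝ Set.univ (fun w => t.sup' hne (fun i => f i w)) := by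
  induction hne using Finset.Nonempty.cons_induction with
  | singleton a =>
    have := h a (by simp)
    simp only [Finset.sup'_singleton]
    exact this
  | cons a t ha hne ih =>
    simp only [Finset.sup'_cons hne]
    have h1 := h a (Finset.mem_cons_self a t)
    have h2 := ih fun i hi => h i (Finset.mem_cons_of_mem hi)
    exact h1.sup h2

lemma sorted_eq (n : ℕ) (s : Fin n → ℝ) :
    ((Finset.univ : Finset (Fin n)).val.map s).sort (· ≤ ·) = List.ofFn (s ∘ Tuple.sort s) := by
  refine (fun p s1 s2 => List.Perm.eq_of_pairwise' (r := (· ≤ ·)) s1 s2 p) ?_ ?_ ?_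
  · apply Multiset.coe_eq_coe.mp
    rw [Multiset.sort_eq]
    have h2 : Multiset.map (⇑(Tuple.sort s)) (Finset.univ : Finset (Fin n)).val
        = (Finset.univ : Finset (Fin n)).val := by
      have := congrArg Finset.val (Finset.map_univ_equiv (Tuple.sort s))
      simpa [Finset.map_val] using this
    symm
    calc (↑(List.ofFn (s ∘ ⇑(Tuple.sort s))) : Multiset ℝ)
        = Multiset.map (s ∘ ⇑(Tuple.sort s)) ↑(List.finRange n) := by
          rw [List.ofFn_eq_map]; simp [Multiset.map_coe]; rfl
      _ = Multiset.map s (Multiset.map (⇑(Tuple.sort s)) (Finset.univ : Finset (Fin n)).val) := by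
          rw [Multiset.map_map]; congr 1
      _ = Multiset.map s (Finset.univ : Finset (Fin n)).val := by rw [h2]
  · exact Multiset.pairwise_sort _ _
  · exact (Tuple.monotone_sort s).sortedLE_ofFn.pairwise

lemma kthScore_eq {n d : ℕ} (w : Fin d → ℝ) (xn : Fin n → Fin d → ℝ) (j : ℕ)
    (h1 : 1 ≤ j) (h2 : j ≤ n) :
    kthScore w xn j
      = (fun l => dot w (xn l)) (Tuple.sort (fun l => dot w (xn l)) ⟨n - j, by omega⟩) := by
  unfold kthScore
  rw [sorted_eq n (fun l => dot w (xn l))]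
  have hlen : n - j <
      (List.ofFn ((fun l => dot w (xn l)) ∘ Tuple.sort (fun l => dot w (xn l)))).length := by
    simp; omega
  rw [List.getD_eq_getElem _ _ hlen]
  simp

lemma sm_le_apply {a b : ℕ} (f : Fin a → Fin b) (hf : StrictMono f) :
    ∀ (k : ℕ) (h : k < a), k ≤ (f ⟨k, h⟩ : ℕ) := by
  intro k
  induction k with
  | zero => intro h; exact Nat.zero_le _
  | succ k ih =>
    intro h
    have hk : k < a := Nat.lt_of_succ_lt h
    have h1 : f ⟨k, hk⟩ < f ⟨k+1, h⟩ := hf (by simp [Fin.lt_def])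
    have := ih hk
    have h2 : (f ⟨k, hk⟩ : ℕ) < (f ⟨k+1, h⟩ : ℕ) := h1
    omega

lemma sm_upper {γ n : ℕ} (e : Fin γ → Fin n) (he : StrictMono e) (i : Fin γ) :
    (e i : ℕ) ≤ n - γ + i := by
  have hrev : StrictMono (fun k : Fin γ => (e k.rev).rev) := by
    intro k k' hkk'
    have : k'.rev < k.rev := Fin.rev_lt_rev.mpr hkk'
    exact Fin.rev_lt_rev.mpr (he this)
  have h := sm_le_apply _ hrev (i.rev : ℕ) (i.rev.isLt)
  simp only [Fin.eta, Fin.rev_rev] at h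
  have h2 : (i.rev : ℕ) ≤ ((e i).rev : ℕ) := h
  have hi : (i.rev : ℕ) = γ - 1 - i := by simp [Fin.rev]; omega
  have hrv : ((e i).rev : ℕ) = n - 1 - (e i : ℕ) := by simp [Fin.rev]; omega
  have hlt : (e i : ℕ) < n := (e i).isLt
  have hlt2 : (i : ℕ) < γ := i.isLt
  omega

lemma sum_le_top {n γ : ℕ} (hγ : γ ≤ n) (G : Fin n → ℝ) (hG : Monotone G)
    (A : Finset (Fin n)) (hA : A.card = γ) :
    ∑ k ∈ A, G k ≤ ∑ i : Fin γ, G ⟨n - γ + i, by omega⟩ := by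
  obtain ⟨e, he1, he2⟩ : ∃ e : Fin γ → Fin n, StrictMono e ∧ A = Finset.image e Finset.univ := by
    refine ⟨A.orderEmbOfFin hA, (A.orderEmbOfFin hA).strictMono, ?_⟩
    ext x
    simp only [Finset.mem_image, Finset.mem_univ, true_and]
    constructor
    · intro hx
      have : x ∈ Set.range (A.orderEmbOfFin hA) := by
        rw [Finset.range_orderEmbOfFin]; exact hx
      exact this
    · rintro ⟨i, rfl⟩; exact A.orderEmbOfFin_mem hA i
  subst he2
  rw [Finset.sum_image (fun a _ b _ hab => he1.injective hab)]
  apply Finset.sum_le_sum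
  intro i _
  apply hG
  have := sm_upper _ he1 i
  rw [Fin.le_def]
  simpa using this

lemma key {m n d : ℕ} (xp : Fin m → Fin d → ℝ) (xn : Fin n → Fin d → ℝ) (γ : ℕ)
    (hγ0 : 0 < γ) (hγn : γ ≤ n) (w : Fin d → ℝ)
    (hne : (Finset.powersetCard γ (Finset.univ : Finset (Fin n))).Nonempty) :
    ∑ i, ∑ j ∈ Finset.Icc 1 γ, max (1 - (dot w (xp i) - kthScore w xn j)) 0
      = (Finset.powersetCard γ (Finset.univ : Finset (Fin n))).sup' hne
          (fun T => ∑ i, ∑ l ∈ T, max (1 - (dot w (xp i) - dot w (xn l))) 0) := by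
  set s : Fin n → ℝ := fun l => dot w (xn l) with hs
  set σ := Tuple.sort s with hσ
  have hmono : Monotone (s ∘ σ) := Tuple.monotone_sort s
  set F : ℝ → ℝ := fun z => ∑ i, max (1 - (dot w (xp i) - z)) 0 with hF
  have hFmono : Monotone F := by
    intro z z' hz
    apply Finset.sum_le_sum
    intro i _
    exact max_le_max (by linarith) le_rfl
  have hLHS : ∑ i, ∑ j ∈ Finset.Icc 1 γ, max (1 - (dot w (xp i) - kthScore w xn j)) 0
      = ∑ i : Fin γ, F (s (σ ⟨n - γ + i, by omega⟩)) := by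
    rw [Finset.sum_comm]
    have himg : Finset.Icc 1 γ = Finset.image (fun i : Fin γ => γ - (i : ℕ)) Finset.univ := by
      ext a
      simp only [Finset.mem_Icc, Finset.mem_image, Finset.mem_univ, true_and]
      constructor
      · intro ⟨ha1, ha2⟩; exact ⟨⟨γ - a, by omega⟩, by simp; omega⟩
      · rintro ⟨i, rfl⟩; have := i.isLt; omega
    have hinj : ∀ a ∈ (Finset.univ : Finset (Fin γ)), ∀ b ∈ (Finset.univ : Finset (Fin γ)),
        γ - (a : ℕ) = γ - (b : ℕ) → a = b := by
      intro a _ b _ hab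
      have ha := a.isLt; have hb := b.isLt
      exact Fin.ext (by omega)
    rw [himg, Finset.sum_image hinj]
    apply Finset.sum_congr rfl
    intro i _
    have hi := i.isLt
    rw [kthScore_eq w xn (γ - i) (by omega) (by omega)]
    have hidx : n - (γ - (i:ℕ)) = n - γ + i := by omega
    have : (⟨n - (γ - (i:ℕ)), by omega⟩ : Fin n) = ⟨n - γ + i, by omega⟩ := Fin.ext hidx
    rw [this]
  have hT : ∀ T ∈ Finset.powersetCard γ (Finset.univ : Finset (Fin n)),
      (∑ i, ∑ l ∈ T, max (1 - (dot w (xp i) - dot w (xn l))) 0) = ∑ l ∈ T, F (s l) := by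
    intro T _
    rw [Finset.sum_comm]
  have hinj2 : Function.Injective (fun i : Fin γ => (⟨n - γ + i, by omega⟩ : Fin n)) := by
    intro a b hab
    have := congrArg Fin.val hab
    simp only [] at this
    exact Fin.ext (by omega)
  obtain ⟨T₀, hT₀mem, hT₀sum⟩ :
      ∃ T₀ ∈ Finset.powersetCard γ (Finset.univ : Finset (Fin n)),
        ∑ l ∈ T₀, F (s l) = ∑ i : Fin γ, F (s (σ ⟨n - γ + i, by omega⟩)) := by
    refine ⟨Finset.image σ (Finset.image (fun i : Fin γ => (⟨n - γ + i, by omega⟩ : Fin n))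
      Finset.univ), ?_, ?_⟩
    · apply Finset.mem_powersetCard_univ.mpr
      rw [Finset.card_image_of_injective _ σ.injective,
        Finset.card_image_of_injective _ hinj2]
      simp
    · rw [Finset.sum_image (fun a _ b _ hab => σ.injective hab),
        Finset.sum_image (fun a _ b _ hab => hinj2 hab)]
  apply le_antisymm
  · rw [hLHS, ← hT₀sum, ← hT T₀ hT₀mem]
    exact Finset.le_sup'
      (fun T => ∑ i, ∑ l ∈ T, max (1 - (dot w (xp i) - dot w (xn l))) 0) hT₀mem
  · apply Finset.sup'_le
    intro T hTmem
    rw [hT T hTmem, hLHS]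
    have hTcard : T.card = γ := Finset.mem_powersetCard_univ.mp hTmem
    set A : Finset (Fin n) := Finset.image σ.symm T with hA
    have hAcard : A.card = γ := by
      rw [hA, Finset.card_image_of_injective _ σ.symm.injective, hTcard]
    have hsum : ∑ l ∈ T, F (s l) = ∑ k ∈ A, F (s (σ k)) := by
      rw [hA, Finset.sum_image (fun a _ b _ hab => σ.symm.injective hab)]
      simp
    rw [hsum]
    exact sum_le_top hγn (fun k => F (s (σ k))) (hFmono.comp hmono) A hAcard

lemma convex_hingeSurr {m n d : ℕ} (xp : Fin m → Fin d → ℝ) (xn : Fin n → Fin d → ℝ)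
    (γ : ℕ) (hγn : γ ≤ n) :
    ConvexOn ℝ Set.univ (hingeSurr xp xn 0 γ) := by
  rcases Nat.eq_zero_or_pos γ with h0 | hpos
  · subst h0
    have : hingeSurr xp xn 0 0 = fun _ : Fin d → ℝ => (0:ℝ) := by
      funext w; simp [hingeSurr]
    rw [this]; exact convexOn_const 0 convex_univ
  · have hne : (Finset.powersetCard γ (Finset.univ : Finset (Fin n))).Nonempty :=
      Finset.powersetCard_nonempty.mpr (by simpa using hγn)
    have heq : hingeSurr xp xn 0 γ = fun w =>
        (1 / ((m:ℝ) * γ)) • (Finset.powersetCard γ (Finset.univ : Finset (Fin n))).sup' hne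
          (fun T => ∑ i, ∑ l ∈ T, max (1 - (dot w (xp i) - dot w (xn l))) 0) := by
      funext w
      simp only [hingeSurr, Nat.cast_zero, sub_zero, zero_add, smul_eq_mul]
      congr 1
      exact key xp xn γ hpos hγn w hne
    rw [heq]
    apply ConvexOn.smul (by positivity)
    apply convexOn_sup'
    intro T _
    apply convexOn_finset_sum
    intro i _
    apply convexOn_finset_sum
    intro l _
    exact convexOn_hinge (xp i) (xn l)

/-- DC decomposition (Section 6): (j_β − j_α)·R̂^hinge_{pAUC(α,β)} =
j_β·R̂^hinge_{pAUC(0,β)} − j_α·R̂^hinge_{pAUC(0,α)}, and each R̂^hinge_{pAUC(0,γ)}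
is convex in w. -/
theorem stmt11 (d m n ja jb : ℕ) (h1 : ja < jb) (h2 : jb ≤ n)
    (xp : Fin m → Fin d → ℝ) (xn : Fin n → Fin d → ℝ) :
    (∀ w : Fin d → ℝ,
        ((jb : ℝ) - (ja : ℝ)) * hingeSurr xp xn ja jb w
          = (jb : ℝ) * hingeSurr xp xn 0 jb w - (ja : ℝ) * hingeSurr xp xn 0 ja w) ∧
    ConvexOn ℝ Set.univ (hingeSurr xp xn 0 jb) ∧
    ConvexOn ℝ Set.univ (hingeSurr xp xn 0 ja) := by
  refine ⟨?_, convex_hingeSurr xp xn jb h2, convex_hingeSurr xp xn ja (by omega)⟩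
  intro w
  by_cases hm : m = 0
  · subst hm
    simp [hingeSurr]
  · have hB : (∑ i, ∑ j ∈ Finset.Icc (0+1) ja, max (1 - (dot w (xp i) - kthScore w xn j)) 0)
        + (∑ i, ∑ j ∈ Finset.Icc (ja+1) jb, max (1 - (dot w (xp i) - kthScore w xn j)) 0)
        = ∑ i, ∑ j ∈ Finset.Icc (0+1) jb, max (1 - (dot w (xp i) - kthScore w xn j)) 0 := by
      rw [← Finset.sum_add_distrib]
      apply Finset.sum_congr rfl
      intro i _
      rw [Finset.Icc_add_one_left_eq_Ioc, Finset.Icc_add_one_left_eq_Ioc,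
        Finset.Icc_add_one_left_eq_Ioc]
      exact Finset.prod_Ioc_consecutive (M := Multiplicative ℝ) _ (Nat.zero_le ja) (le_of_lt h1)
    simp only [hingeSurr, Nat.cast_zero, sub_zero]
    rcases Nat.eq_zero_or_pos ja with hja | hja
    · subst hja
      simp
    · have hmne : (m:ℝ) ≠ 0 := Nat.cast_ne_zero.mpr hm
      have hjane : (ja:ℝ) ≠ 0 := Nat.cast_ne_zero.mpr (by omega)
      have hjbne : (jb:ℝ) ≠ 0 := Nat.cast_ne_zero.mpr (by omega)
      have hdiff : (jb:ℝ) - (ja:ℝ) ≠ 0 := by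
        have : (ja:ℝ) < (jb:ℝ) := Nat.cast_lt.mpr h1
        intro hc; linarith
      rw [← hB]
      field_simp
      ring
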